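/- Let 0 < p < 1, q ≥ 1, ε > 0 be real numbers, let m, n ≥ 1 be integers, let a ∈ ℤ^n and B ∈ ℤ, and define for x ∈ ℝ^{n×m}: P_ε(x) = Σ_{j=1}^m |Σ_{i=1}^n a_i x_{ij} − B|^q + Σ_{i=1}^n |Σ_{j=1}^m x_{ij} − 1|^q + (1/2) Σ_{i=1}^n Σ_{j=1}^m (|x_{ij}| + ε)^p. Then P_ε(x) ≥ n·( c(p,q,ε) + ((m−1)/2)·ε^p ) for all x ∈ ℝ^{n×m}, where c(p,q,ε) = min_{z∈ℝ} (|1−z|^q + (1/2)(|z|+ε)^p). -/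

import Mathlib

open Real Finset

private lemma aux_two (p eps : ℝ) (hp0 : 0 < p) (hp1 : p < 1) (heps : 0 < eps)
    {t s : ℝ} (ht : 0 ≤ t) (hs : 0 ≤ s) :
    (t + s + eps) ^ p + eps ^ p ≤ (t + eps) ^ p + (s + eps) ^ p := by
  have hanti : AntitoneOn (fun u : ℝ => (u + t) ^ p - u ^ p) (Set.Ici eps) := by
    have hderiv : ∀ u ∈ interior (Set.Ici eps),
        HasDerivAt (fun u : ℝ => (u + t) ^ p - u ^ p)
          (p * (u + t) ^ (p - 1) - p * u ^ (p - 1)) u := by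
      intro u hu
      rw [interior_Ici] at hu
      have hu0 : 0 < u := heps.trans hu
      have h1 : HasDerivAt (fun u : ℝ => (u + t) ^ p)
          (p * (u + t) ^ (p - 1) * 1) u := by
        exact (Real.hasDerivAt_rpow_const
          (Or.inl (by positivity))).comp u ((hasDerivAt_id u).add_const t)
      have h2 : HasDerivAt (fun u : ℝ => u ^ p) (p * u ^ (p - 1)) u :=
        Real.hasDerivAt_rpow_const (Or.inl hu0.ne')
      have h3 := h1.sub h2
      rw [mul_one] at h3
      exact h3
    apply antitoneOn_of_deriv_nonpos (convex_Ici eps)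
    · apply ContinuousOn.sub
      · apply ContinuousOn.rpow_const
        · exact (continuous_id.add continuous_const).continuousOn
        · intro u hu; left; have : (0:ℝ) < u := lt_of_lt_of_le heps hu; positivity
      · apply ContinuousOn.rpow_const continuous_id.continuousOn
        intro u hu; left; exact (lt_of_lt_of_le heps hu).ne'
    · intro u hu
      exact (hderiv u hu).differentiableAt.differentiableWithinAt
    · intro u hu
      rw [(hderiv u hu).deriv]
      have hu0 : 0 < u := heps.trans (by rwa [interior_Ici] at hu)
      have : (u + t) ^ (p - 1) ≤ u ^ (p - 1) :=
        Real.rpow_le_rpow_of_nonpos hu0 (by linarith) (by linarith)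
      nlinarith
  have h := hanti (Set.self_mem_Ici) (by simp [hs] : s + eps ∈ Set.Ici eps)
    (by linarith)
  simp only at h
  have heq : s + eps + t = t + s + eps := by ring
  have heq2 : eps + t = t + eps := by ring
  rw [heq, heq2] at h
  linarith

private lemma aux_sum {ι : Type*} (p eps : ℝ) (hp0 : 0 < p) (hp1 : p < 1)
    (heps : 0 < eps) (S : Finset ι) (f : ι → ℝ) (hf : ∀ i ∈ S, 0 ≤ f i) :
    (∑ i ∈ S, f i + eps) ^ p + (S.card : ℝ) * eps ^ p ≤
      (∑ i ∈ S, (f i + eps) ^ p) + eps ^ p := by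
  induction S using Finset.cons_induction with
  | empty => simp
  | cons a S ha ih =>
    have hT : 0 ≤ ∑ i ∈ S, f i := Finset.sum_nonneg fun i hi => hf i (mem_cons_of_mem hi)
    have hfa : 0 ≤ f a := hf a (mem_cons_self a S)
    have h2 := aux_two p eps hp0 hp1 heps hfa hT
    have ih' := ih fun i hi => hf i (mem_cons_of_mem hi)
    rw [Finset.sum_cons, Finset.sum_cons, Finset.card_cons]
    push_cast
    have : f a + ∑ i ∈ S, f i + eps = f a + (∑ i ∈ S, f i) + eps := by ring
    rw [this]
    linarith

/-- The 3-partition reduction objective for the smoothed problem is bounded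
below by `n·(c(p,q,ε) + ((m−1)/2)·ε^p)`, where `c(p,q,ε)` is the minimum of
`g_ε(z) = |1 − z|^q + (1/2)(|z| + ε)^p` over ℝ. -/
theorem stmt_14 (p q eps : ℝ) (m n : ℕ) (hm : 1 ≤ m) (hn : 1 ≤ n)
    (hp0 : 0 < p) (hp1 : p < 1) (hq : 1 ≤ q) (heps : 0 < eps)
    (a : Fin n → ℤ) (B : ℤ) (c : ℝ)
    (hc : IsLeast
      (Set.range fun z : ℝ => |1 - z| ^ q + (1 / 2) * (|z| + eps) ^ p) c)
    (x : Fin n → Fin m → ℝ) :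
    (n : ℝ) * (c + ((m : ℝ) - 1) / 2 * eps ^ p) ≤
      (∑ j, |(∑ i, (a i : ℝ) * x i j) - (B : ℝ)| ^ q) +
        (∑ i, |(∑ j, x i j) - 1| ^ q) +
        (1 / 2) * ∑ i, ∑ j, (|x i j| + eps) ^ p := by
  have hrow : ∀ i : Fin n, c + ((m : ℝ) - 1) / 2 * eps ^ p ≤
      |(∑ j, x i j) - 1| ^ q + (1 / 2) * ∑ j, (|x i j| + eps) ^ p := by
    intro i
    set s := ∑ j, x i j with hs
    have hcle : c ≤ |1 - s| ^ q + (1 / 2) * (|s| + eps) ^ p := hc.2 ⟨s, rfl⟩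
    have habs : |s| ≤ ∑ j, |x i j| := Finset.abs_sum_le_sum_abs _ _
    have h1 : (|s| + eps) ^ p ≤ (∑ j, |x i j| + eps) ^ p :=
      Real.rpow_le_rpow (by positivity) (by linarith) hp0.le
    have h2 := aux_sum p eps hp0 hp1 heps Finset.univ (fun j => |x i j|)
      (fun j _ => abs_nonneg _)
    simp only [Finset.card_univ, Fintype.card_fin] at h2
    have h3 : (|s| + eps) ^ p + ((m : ℝ) - 1) * eps ^ p ≤ ∑ j, (|x i j| + eps) ^ p := by
      have : (1:ℝ) ≤ (m:ℝ) := by exact_mod_cast hm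
      linarith
    rw [abs_sub_comm 1 s] at hcle
    linarith
  have hdrop : (0:ℝ) ≤ ∑ j, |(∑ i, (a i : ℝ) * x i j) - (B : ℝ)| ^ q :=
    Finset.sum_nonneg fun j _ => Real.rpow_nonneg (abs_nonneg _) _
  have hsum : (n : ℝ) * (c + ((m : ℝ) - 1) / 2 * eps ^ p) ≤
      ∑ i, (|(∑ j, x i j) - 1| ^ q + (1 / 2) * ∑ j, (|x i j| + eps) ^ p) := by
    calc (n : ℝ) * (c + ((m : ℝ) - 1) / 2 * eps ^ p)
        = ∑ _i : Fin n, (c + ((m : ℝ) - 1) / 2 * eps ^ p) := by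
          simp [Finset.sum_const, Finset.card_univ]; ring
      _ ≤ _ := Finset.sum_le_sum fun i _ => hrow i
  rw [Finset.sum_add_distrib, ← Finset.mul_sum] at hsum
  linarith
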